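/- Let z ∈ Ĩ_n and i < j with j ≢ i (mod n). Suppose that either all of i, i+1, …, j−1 are right endpoints of z, or all of i+1, …, j−1, j are left endpoints of z. Then ℓ(t_{ij} z t_{ij}) = ℓ(z) + 2 if and only if ℓ(z t_{ij}) = ℓ(z) + 1. -/

import Mathlib

open Finset

/-- `w` is an element of the affine symmetric group `S̃_n`: a bijection `ℤ → ℤ` with
`w (i + n) = w i + n` for all `i` and `∑_{i=1}^n w i = n (n+1)/2`. -/
def IsAffine (n : ℕ) (w : Equiv.Perm ℤ) : Prop :=
  (∀ i : ℤ, w (i + n) = w i + n) ∧ ∑ i ∈ Finset.Icc (1 : ℤ) (n : ℤ), (w i - i) = 0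

/-- The Coxeter length of `w ∈ S̃_n`: the number of inversions `(i, j)`, `i < j`,
`w i > w j`, counted up to the equivalence `(i,j) ∼ (i+n, j+n)` (representatives with
`i ∈ [n]`). -/
noncomputable def affLen (n : ℕ) (w : Equiv.Perm ℤ) : ℕ :=
  Nat.card {p : ℤ × ℤ // 1 ≤ p.1 ∧ p.1 ≤ (n : ℤ) ∧ p.1 < p.2 ∧ w p.2 < w p.1}

/-- The absolute length of an involution `z ∈ Ĩ_n`: the number of 2-cycles
`(i, j)` with `i < j = z i`, counted up to the equivalence `(i,j) ∼ (i+n, j+n)`. -/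
noncomputable def absLen (n : ℕ) (z : Equiv.Perm ℤ) : ℕ :=
  Nat.card {p : ℤ × ℤ // 1 ≤ p.1 ∧ p.1 ≤ (n : ℤ) ∧ p.1 < p.2 ∧ z p.1 = p.2}

/-- The underlying function of the reflection `t_{i j}`: it sends `i + m n ↦ j + m n` and
`j + m n ↦ i + m n` for all `m`, fixing everything else. -/
def tFun (n : ℕ) (i j x : ℤ) : ℤ :=
  if (n : ℤ) ∣ x - i then x + (j - i) else if (n : ℤ) ∣ x - j then x - (j - i) else x

theorem tFun_comp (n : ℕ) (i j x : ℤ) : tFun n j i (tFun n i j x) = x := by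
  unfold tFun
  by_cases h1 : (n : ℤ) ∣ x - i
  · rw [if_pos h1]
    have c1 : (n : ℤ) ∣ x + (j - i) - j := by
      have e : x + (j - i) - j = x - i := by ring
      rw [e]; exact h1
    rw [if_pos c1]; ring
  · rw [if_neg h1]
    by_cases h2 : (n : ℤ) ∣ x - j
    · rw [if_pos h2]
      have c1 : ¬ (n : ℤ) ∣ x - (j - i) - j := by
        intro hc
        apply h1
        have e : x - i = 2 * (x - j) - (x - (j - i) - j) := by ring
        rw [e]
        exact dvd_sub (Dvd.dvd.mul_left h2 2) hc
      have c2 : (n : ℤ) ∣ x - (j - i) - i := by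
        have e : x - (j - i) - i = x - j := by ring
        rw [e]; exact h2
      rw [if_neg c1, if_pos c2]; ring
    · simp only [if_neg h1, if_neg h2]

/-- The reflection `t_{i j} ∈ S̃_n`. -/
def tPerm (n : ℕ) (i j : ℤ) : Equiv.Perm ℤ :=
  ⟨tFun n i j, tFun n j i, fun x => tFun_comp n i j x, fun x => tFun_comp n j i x⟩

/-- The simple generator `s_i = t_{i, i+1} ∈ S̃_n`. -/
def sPerm (n : ℕ) (i : ℤ) : Equiv.Perm ℤ := tPerm n i (i + 1)

namespace AffProof

/-- periodicity -/
def Per (n : ℕ) (w : Equiv.Perm ℤ) : Prop := ∀ x : ℤ, w (x + n) = w x + n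

/-- the inversion set -/
def Iset (n : ℕ) (w : Equiv.Perm ℤ) : Set (ℤ × ℤ) :=
  {p | 1 ≤ p.1 ∧ p.1 ≤ (n : ℤ) ∧ p.1 < p.2 ∧ w p.2 < w p.1}

lemma affLen_eq (n : ℕ) (w : Equiv.Perm ℤ) : affLen n w = (Iset n w).ncard := rfl

lemma tPerm_apply (n : ℕ) (i j x : ℤ) : tPerm n i j x = tFun n i j x := rfl

lemma tP_i {n : ℕ} {i j x : ℤ} (h : (n : ℤ) ∣ x - i) : tPerm n i j x = x + (j - i) := by
  rw [tPerm_apply, tFun, if_pos h]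

lemma tP_j {n : ℕ} {i j x : ℤ} (hni : ¬ (n : ℤ) ∣ x - i) (h : (n : ℤ) ∣ x - j) :
    tPerm n i j x = x - (j - i) := by
  rw [tPerm_apply, tFun, if_neg hni, if_pos h]

lemma tP_o {n : ℕ} {i j x : ℤ} (hni : ¬ (n : ℤ) ∣ x - i) (hnj : ¬ (n : ℤ) ∣ x - j) :
    tPerm n i j x = x := by
  rw [tPerm_apply, tFun, if_neg hni, if_neg hnj]

lemma per_mul {n : ℕ} {w v : Equiv.Perm ℤ} (hw : Per n w) (hv : Per n v) : Per n (w * v) := by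
  intro x
  simp only [Equiv.Perm.mul_apply, hv x, hw (v x)]

lemma per_inv {n : ℕ} {w : Equiv.Perm ℤ} (hw : Per n w) : Per n w⁻¹ := by
  intro x
  apply w.injective
  rw [hw (w⁻¹ x)]; simp only [Equiv.Perm.coe_inv, Equiv.apply_symm_apply]

lemma per_t (n : ℕ) (i j : ℤ) : Per n (tPerm n i j) := by
  intro x
  have h1 : ∀ y : ℤ, ((n:ℤ) ∣ x + n - y) ↔ ((n:ℤ) ∣ x - y) := by
    intro y
    constructor
    · intro h; have := dvd_sub h (dvd_refl (n:ℤ)); simpa using (by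
        have e : x + n - y - n = x - y := by ring
        rwa [e] at this)
    · intro h; have := dvd_add h (dvd_refl (n:ℤ)); simpa using (by
        have e : x - y + n = x + n - y := by ring
        rwa [e] at this)
  by_cases hi : (n:ℤ) ∣ x - i
  · rw [tP_i hi, tP_i ((h1 i).2 hi)]; ring
  · by_cases hj : (n:ℤ) ∣ x - j
    · rw [tP_j hi hj, tP_j (fun hc => hi ((h1 i).1 hc)) ((h1 j).2 hj)]; ring
    · rw [tP_o hi hj, tP_o (fun hc => hi ((h1 i).1 hc)) (fun hc => hj ((h1 j).1 hc))]

lemma per_smul {n : ℕ} {w : Equiv.Perm ℤ} (hw : Per n w) :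
    ∀ (m x : ℤ), w (x + m * n) = w x + m * n := by
  intro m
  induction m using Int.induction_on with
  | zero => simp
  | succ k ih =>
      intro x
      have : x + (k + 1 : ℤ) * n = (x + k * n) + n := by ring
      rw [this, hw, ih]; ring
  | pred k ih =>
      intro x
      have e : x + (-k - 1 : ℤ) * n + n = x + (-k : ℤ) * n := by ring
      have := hw (x + (-k - 1 : ℤ) * n)
      rw [e, ih] at this
      omega

lemma per_dvd {n : ℕ} {w : Equiv.Perm ℤ} (hw : Per n w) {x y : ℤ}
    (h : (n:ℤ) ∣ y - x) : w y = w x + (y - x) := by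
  obtain ⟨m, hm⟩ := h
  have hy : y = x + m * n := by linarith [hm]
  rw [hy, per_smul hw]; ring

end AffProof

namespace AffProof

/-- representative of `x` in `[1, n]` -/
def redI (n : ℕ) (x : ℤ) : ℤ := (x - 1) % (n : ℤ) + 1

lemma red_ge {n : ℕ} (hn : 0 < n) (x : ℤ) : 1 ≤ redI n x := by
  have := Int.emod_nonneg (x - 1) (by exact_mod_cast hn.ne' : (n:ℤ) ≠ 0)
  unfold redI; omega

lemma red_le {n : ℕ} (hn : 0 < n) (x : ℤ) : redI n x ≤ n := by
  have := Int.emod_lt_of_pos (x - 1) (by exact_mod_cast hn : (0:ℤ) < n)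
  unfold redI; omega

lemma red_dvd (n : ℕ) (x : ℤ) : (n : ℤ) ∣ x - redI n x := by
  unfold redI
  have := Int.emod_add_mul_ediv (x - 1) (n : ℤ)
  exact ⟨(x - 1) / n, by omega⟩

lemma red_congr {n : ℕ} {x y : ℤ} (h : (n:ℤ) ∣ x - y) : redI n x = redI n y := by
  unfold redI
  have : (x - 1) % (n:ℤ) = (y - 1) % (n:ℤ) := by
    have : (x - 1) ≡ (y - 1) [ZMOD (n:ℤ)] := by
      apply Int.ModEq.sub_right
      exact (Int.modEq_iff_dvd.2 (by obtain ⟨c, hc⟩ := h; exact ⟨-c, by linarith⟩))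
    exact this
  omega

lemma red_self {n : ℕ} {x : ℤ} (h1 : 1 ≤ x) (h2 : x ≤ n) : redI n x = x := by
  unfold redI
  rw [Int.emod_eq_of_lt (by omega) (by omega)]
  ring

end AffProof
namespace AffProof

lemma disp_eq {n : ℕ} {w : Equiv.Perm ℤ} (hn : 0 < n) (hw : Per n w) (x : ℤ) :
    w x - x = w (redI n x) - redI n x := by
  have := per_dvd hw (x := redI n x) (y := x) (red_dvd n x)
  omega

lemma exists_bound {n : ℕ} {w : Equiv.Perm ℤ} (hn : 0 < n) (hw : Per n w) :
    ∃ M : ℤ, 0 ≤ M ∧ ∀ x : ℤ, |w x - x| ≤ M := by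
  refine ⟨∑ r ∈ Finset.Icc (1:ℤ) (n:ℤ), |w r - r|, Finset.sum_nonneg fun r _ => abs_nonneg _, ?_⟩
  intro x
  rw [disp_eq hn hw x]
  apply Finset.single_le_sum (fun r _ => abs_nonneg (w r - r))
  exact Finset.mem_Icc.2 ⟨red_ge hn x, red_le hn x⟩

lemma iset_finite {n : ℕ} {w : Equiv.Perm ℤ} (hn : 0 < n) (hw : Per n w) :
    (Iset n w).Finite := by
  obtain ⟨M, hM0, hM⟩ := exists_bound hn hw
  apply Set.Finite.subset (Set.finite_Icc ((1:ℤ), (1:ℤ)) ((n:ℤ) + 2*M, (n:ℤ) + 2*M))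
  rintro ⟨a, b⟩ hp
  obtain ⟨h1, h2, h3, h4⟩ : 1 ≤ a ∧ a ≤ (n:ℤ) ∧ a < b ∧ w b < w a := hp
  have ha := hM a
  have hb := hM b
  rw [abs_le] at ha hb
  simp only [Set.mem_Icc, Prod.mk_le_mk]
  constructor
  · exact ⟨h1, by omega⟩
  · exact ⟨by omega, by omega⟩

/-- cardinality transfer along a two-sided bijection -/
lemma ncard_bij {s t : Set (ℤ × ℤ)} (f g : ℤ × ℤ → ℤ × ℤ)
    (hf : ∀ p ∈ s, f p ∈ t) (hg : ∀ q ∈ t, g q ∈ s)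
    (hgf : ∀ p ∈ s, g (f p) = p) (hfg : ∀ q ∈ t, f (g q) = q) :
    s.ncard = t.ncard := by
  have himg : f '' s = t := by
    apply Set.Subset.antisymm
    · rintro q ⟨p, hp, rfl⟩; exact hf p hp
    · intro q hq; exact ⟨g q, hg q hq, hfg q hq⟩
  have hinj : Set.InjOn f s := by
    intro p hp p' hp' h
    rw [← hgf p hp, ← hgf p' hp', h]
  rw [← himg, Set.ncard_image_of_injOn hinj]

end AffProof
namespace AffProof

lemma per_shift {n : ℕ} {w : Equiv.Perm ℤ} (hw : Per n w) {s : ℤ} (hs : (n:ℤ) ∣ s) (x : ℤ) :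
    w (x + s) = w x + s := by
  have h := per_dvd hw (x := x) (y := x + s) (by simpa using hs)
  omega

/-- normalize an ordered pair by shifting into the window `[1, n]` -/
def nrmP (n : ℕ) (x y : ℤ) : ℤ × ℤ := (redI n x, y + (redI n x - x))

lemma nrmP_eq (n : ℕ) (x y : ℤ) :
    nrmP n x y = (x + (redI n x - x), y + (redI n x - x)) := by
  unfold nrmP; congr 1; ring

lemma nrmP_shift {n : ℕ} {a s : ℤ} (h1 : 1 ≤ a) (h2 : a ≤ (n:ℤ)) (hs : (n:ℤ) ∣ s) (b : ℤ) :
    nrmP n (a + s) (b + s) = (a, b) := by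
  have hr : redI n (a + s) = a := by
    rw [red_congr (x := a + s) (y := a) (by simpa using hs)]
    exact red_self h1 h2
  unfold nrmP
  rw [hr]
  congr 1
  ring

lemma mem_iset {n : ℕ} {w : Equiv.Perm ℤ} {p : ℤ × ℤ} :
    p ∈ Iset n w ↔ 1 ≤ p.1 ∧ p.1 ≤ (n:ℤ) ∧ p.1 < p.2 ∧ w p.2 < w p.1 := Iff.rfl

lemma nrm_mem_frame {n : ℕ} (hn : 0 < n) (x y : ℤ) (hxy : x < y) :
    1 ≤ (nrmP n x y).1 ∧ (nrmP n x y).1 ≤ (n:ℤ) ∧ (nrmP n x y).1 < (nrmP n x y).2 := by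
  refine ⟨red_ge hn x, red_le hn x, ?_⟩
  unfold nrmP
  simp only
  omega

lemma red_sub_dvd (n : ℕ) (x : ℤ) : (n:ℤ) ∣ (redI n x - x) := by
  obtain ⟨c, hc⟩ := red_dvd n x
  exact ⟨-c, by linarith⟩

end AffProof
namespace AffProof

/-- `ℓ(w) = ℓ(w⁻¹)` -/
lemma ncard_inv {n : ℕ} {w : Equiv.Perm ℤ} (hn : 0 < n) (hw : Per n w) :
    (Iset n w).ncard = (Iset n w⁻¹).ncard := by
  have key : ∀ (u : Equiv.Perm ℤ), Per n u →
      ∀ p ∈ Iset n u, nrmP n (u p.2) (u p.1) ∈ Iset n u⁻¹ := by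
    intro u hu p hp
    obtain ⟨h1, h2, h3, h4⟩ := mem_iset.1 hp
    obtain ⟨hf1, hf2, hf3⟩ := nrm_mem_frame hn (u p.2) (u p.1) h4
    refine mem_iset.2 ⟨hf1, hf2, hf3, ?_⟩
    have hsd : (n:ℤ) ∣ redI n (u p.2) - u p.2 := red_sub_dvd n (u p.2)
    have e : nrmP n (u p.2) (u p.1) = (u p.2 + (redI n (u p.2) - u p.2),
        u p.1 + (redI n (u p.2) - u p.2)) := nrmP_eq n _ _
    simp only [e, per_shift (per_inv hu) hsd, (by simp : ∀ y, u⁻¹ (u y) = y)]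
    omega
  have comp : ∀ (u : Equiv.Perm ℤ), Per n u → ∀ p ∈ Iset n u,
      nrmP n (u⁻¹ (nrmP n (u p.2) (u p.1)).2) (u⁻¹ (nrmP n (u p.2) (u p.1)).1) = p := by
    intro u hu p hp
    obtain ⟨h1, h2, h3, h4⟩ := mem_iset.1 hp
    have hsd : (n:ℤ) ∣ redI n (u p.2) - u p.2 := red_sub_dvd n (u p.2)
    have e : nrmP n (u p.2) (u p.1) = (u p.2 + (redI n (u p.2) - u p.2),
        u p.1 + (redI n (u p.2) - u p.2)) := nrmP_eq n _ _
    simp only [e, per_shift (per_inv hu) hsd, (by simp : ∀ y, u⁻¹ (u y) = y)]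
    simpa using nrmP_shift h1 h2 hsd p.2
  apply ncard_bij (fun p => nrmP n (w p.2) (w p.1)) (fun q => nrmP n (w⁻¹ q.2) (w⁻¹ q.1))
  · exact key w hw
  · intro q hq
    have := key w⁻¹ (per_inv hw) q hq
    simpa using this
  · exact comp w hw
  · intro q hq
    have := comp w⁻¹ (per_inv hw) q hq
    simpa using this

/-- conjugation by negation preserves length -/
lemma ncard_neg {n : ℕ} {w v : Equiv.Perm ℤ} (hn : 0 < n) (hw : Per n w) (hv : Per n v)
    (hvw : ∀ x : ℤ, v x = - w (-x)) :
    (Iset n v).ncard = (Iset n w).ncard := by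
  have key : ∀ (u u' : Equiv.Perm ℤ), Per n u' → (∀ x : ℤ, u x = - u' (-x)) →
      ∀ p ∈ Iset n u, nrmP n (-p.2) (-p.1) ∈ Iset n u' := by
    intro u u' hu' huu p hp
    obtain ⟨h1, h2, h3, h4⟩ := mem_iset.1 hp
    obtain ⟨hf1, hf2, hf3⟩ := nrm_mem_frame hn (-p.2) (-p.1) (by omega)
    refine mem_iset.2 ⟨hf1, hf2, hf3, ?_⟩
    have hsd : (n:ℤ) ∣ redI n (-p.2) - (-p.2) := red_sub_dvd n (-p.2)
    have e : nrmP n (-p.2) (-p.1) = (-p.2 + (redI n (-p.2) - (-p.2)),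
        -p.1 + (redI n (-p.2) - (-p.2))) := nrmP_eq n _ _
    simp only [e, per_shift hu' hsd]
    have e1 := huu p.1
    have e2 := huu p.2
    omega
  have huv : ∀ x : ℤ, w x = - v (-x) := by
    intro x
    have h := hvw (-x)
    simp only [neg_neg] at h
    omega
  have comp : ∀ p : ℤ × ℤ, p ∈ Iset n v ∪ Iset n w →
      nrmP n (-(nrmP n (-p.2) (-p.1)).2) (-(nrmP n (-p.2) (-p.1)).1) = p := by
    intro p hp
    have hfr : 1 ≤ p.1 ∧ p.1 ≤ (n:ℤ) := by
      rcases hp with hp | hp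
      · exact ⟨(mem_iset.1 hp).1, (mem_iset.1 hp).2.1⟩
      · exact ⟨(mem_iset.1 hp).1, (mem_iset.1 hp).2.1⟩
    have hsd : (n:ℤ) ∣ redI n (-p.2) - (-p.2) := red_sub_dvd n (-p.2)
    have e : nrmP n (-p.2) (-p.1) = (-p.2 + (redI n (-p.2) - (-p.2)),
        -p.1 + (redI n (-p.2) - (-p.2))) := nrmP_eq n _ _
    simp only [e]
    have e1 : -(-p.1 + (redI n (-p.2) - (-p.2))) = p.1 + -(redI n (-p.2) - (-p.2)) := by ring
    have e2 : -(-p.2 + (redI n (-p.2) - (-p.2))) = p.2 + -(redI n (-p.2) - (-p.2)) := by ring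
    rw [e1, e2]
    simpa using nrmP_shift hfr.1 hfr.2 (dvd_neg.2 hsd) p.2
  apply ncard_bij (fun p => nrmP n (-p.2) (-p.1)) (fun p => nrmP n (-p.2) (-p.1))
  · exact key v w hw hvw
  · exact key w v hv huv
  · exact fun p hp => comp p (Set.mem_union_left _ hp)
  · exact fun p hp => comp p (Set.mem_union_right _ hp)

end AffProof
namespace AffProof

lemma dvd_shift {n : ℕ} {u v : ℤ} (h : (n:ℤ) ∣ u - v) (x : ℤ) :
    (n:ℤ) ∣ (x - u) ↔ (n:ℤ) ∣ (x - v) := by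
  constructor
  · intro hc
    have h2 := dvd_add hc h
    have e : x - u + (u - v) = x - v := by ring
    rwa [e] at h2
  · intro hc
    have h2 := dvd_sub hc h
    have e : x - v - (u - v) = x - u := by ring
    rwa [e] at h2

lemma t_invol {n : ℕ} {i j : ℤ} (hnd : ¬ (n:ℤ) ∣ j - i) (x : ℤ) :
    tPerm n i j (tPerm n i j x) = x := by
  by_cases hi : (n:ℤ) ∣ x - i
  · rw [tP_i hi]
    have hdi : ¬ (n:ℤ) ∣ (x + (j - i)) - i := by
      intro hc
      apply hnd
      have h2 := dvd_sub hc hi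
      have e : (x + (j - i)) - i - (x - i) = j - i := by ring
      rwa [e] at h2
    have hdj : (n:ℤ) ∣ (x + (j - i)) - j := by
      have e : (x + (j - i)) - j = x - i := by ring
      rw [e]; exact hi
    rw [tP_j hdi hdj]; ring
  · by_cases hj : (n:ℤ) ∣ x - j
    · rw [tP_j hi hj]
      have hdi : (n:ℤ) ∣ (x - (j - i)) - i := by
        have e : (x - (j - i)) - i = x - j := by ring
        rw [e]; exact hj
      rw [tP_i hdi]; ring
    · rw [tP_o hi hj, tP_o hi hj]

def fMap (n : ℕ) (t : Equiv.Perm ℤ) (p : ℤ × ℤ) : ℤ × ℤ := nrmP n (t p.1) (t p.2)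
def gMap (n : ℕ) (t : Equiv.Perm ℤ) (p : ℤ × ℤ) : ℤ × ℤ := nrmP n (t p.2) (t p.1)

/-- the key length formula for right multiplication by a reflection -/
lemma key_mul {n : ℕ} {w : Equiv.Perm ℤ} (hn : 0 < n) (hw : Per n w) {i j : ℤ}
    (hnd : ¬ (n:ℤ) ∣ j - i) :
    (Iset n (w * tPerm n i j)).ncard + 2 * ((Iset n w) ∩ (Iset n (tPerm n i j))).ncard
      = (Iset n w).ncard + (Iset n (tPerm n i j)).ncard := by
  set t := tPerm n i j with hts
  have ht : Per n t := per_t n i j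
  have htt : ∀ x, t (t x) = x := t_invol hnd
  have hA : (Iset n (w * t)).Finite := iset_finite hn (per_mul hw ht)
  have hS : (Iset n w).Finite := iset_finite hn hw
  have hR : (Iset n t).Finite := iset_finite hn ht
  have horder : ∀ p : ℤ × ℤ, p.1 < p.2 → ¬ (t p.2 < t p.1) → t p.1 < t p.2 := by
    intro p h hn'
    rcases lt_or_eq_of_le (not_lt.1 hn') with h' | h'
    · exact h'
    · exact absurd (t.injective h') (by omega)
  -- compositions
  have Cf : ∀ p : ℤ × ℤ, 1 ≤ p.1 → p.1 ≤ (n:ℤ) → fMap n t (fMap n t p) = p := by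
    intro p h1 h2
    have hsd := red_sub_dvd n (t p.1)
    have e : fMap n t p = (t p.1 + (redI n (t p.1) - t p.1),
        t p.2 + (redI n (t p.1) - t p.1)) := nrmP_eq n _ _
    rw [e]
    show nrmP n (t (t p.1 + (redI n (t p.1) - t p.1))) (t (t p.2 + (redI n (t p.1) - t p.1))) = p
    rw [per_shift ht hsd (t p.1), per_shift ht hsd (t p.2), htt p.1, htt p.2]
    simpa using nrmP_shift h1 h2 hsd p.2
  have Cg : ∀ p : ℤ × ℤ, 1 ≤ p.1 → p.1 ≤ (n:ℤ) → gMap n t (gMap n t p) = p := by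
    intro p h1 h2
    have hsd := red_sub_dvd n (t p.2)
    have e : gMap n t p = (t p.2 + (redI n (t p.2) - t p.2),
        t p.1 + (redI n (t p.2) - t p.2)) := nrmP_eq n _ _
    rw [e]
    show nrmP n (t (t p.1 + (redI n (t p.2) - t p.2))) (t (t p.2 + (redI n (t p.2) - t p.2))) = p
    rw [per_shift ht hsd (t p.1), per_shift ht hsd (t p.2), htt p.1, htt p.2]
    simpa using nrmP_shift h1 h2 hsd p.2
  -- memberships
  have B1 : ∀ u : Equiv.Perm ℤ, Per n u → ∀ p ∈ (Iset n (u * t)) \ (Iset n t),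
      fMap n t p ∈ (Iset n u) \ (Iset n t) := by
    intro u hu p hp
    obtain ⟨hpA, hpR⟩ := hp
    obtain ⟨h1, h2, h3, h4⟩ := mem_iset.1 hpA
    rw [Equiv.Perm.mul_apply, Equiv.Perm.mul_apply] at h4
    have hrev : ¬ (t p.2 < t p.1) := fun hc => hpR (mem_iset.2 ⟨h1, h2, h3, hc⟩)
    have hlt := horder p h3 hrev
    have hsd := red_sub_dvd n (t p.1)
    have e : fMap n t p = (t p.1 + (redI n (t p.1) - t p.1),
        t p.2 + (redI n (t p.1) - t p.1)) := nrmP_eq n _ _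
    obtain ⟨hf1, hf2, hf3⟩ := nrm_mem_frame hn (t p.1) (t p.2) hlt
    constructor
    · refine mem_iset.2 ⟨hf1, hf2, hf3, ?_⟩
      show u (fMap n t p).2 < u (fMap n t p).1
      rw [e]
      show u (t p.2 + _) < u (t p.1 + _)
      rw [per_shift hu hsd, per_shift hu hsd]
      omega
    · intro hc
      have h5 := (mem_iset.1 hc).2.2.2
      rw [e] at h5
      have : t (t p.2 + (redI n (t p.1) - t p.1)) < t (t p.1 + (redI n (t p.1) - t p.1)) := h5
      rw [per_shift ht hsd, per_shift ht hsd, htt p.1, htt p.2] at this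
      omega
  have B1' : ∀ u : Equiv.Perm ℤ, Per n u → ∀ p ∈ (Iset n u) \ (Iset n t),
      fMap n t p ∈ (Iset n (u * t)) \ (Iset n t) := by
    intro u hu p hp
    obtain ⟨hpA, hpR⟩ := hp
    obtain ⟨h1, h2, h3, h4⟩ := mem_iset.1 hpA
    have hrev : ¬ (t p.2 < t p.1) := fun hc => hpR (mem_iset.2 ⟨h1, h2, h3, hc⟩)
    have hlt := horder p h3 hrev
    have hsd := red_sub_dvd n (t p.1)
    have e : fMap n t p = (t p.1 + (redI n (t p.1) - t p.1),
        t p.2 + (redI n (t p.1) - t p.1)) := nrmP_eq n _ _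
    obtain ⟨hf1, hf2, hf3⟩ := nrm_mem_frame hn (t p.1) (t p.2) hlt
    constructor
    · refine mem_iset.2 ⟨hf1, hf2, hf3, ?_⟩
      show u (t (fMap n t p).2) < u (t (fMap n t p).1)
      rw [e]
      show u (t (t p.2 + _)) < u (t (t p.1 + _))
      rw [per_shift ht hsd, per_shift ht hsd, htt p.1, htt p.2,
        per_shift hu hsd, per_shift hu hsd]
      omega
    · intro hc
      have h5 := (mem_iset.1 hc).2.2.2
      rw [e] at h5
      have : t (t p.2 + (redI n (t p.1) - t p.1)) < t (t p.1 + (redI n (t p.1) - t p.1)) := h5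
      rw [per_shift ht hsd, per_shift ht hsd, htt p.1, htt p.2] at this
      omega
  have B2 : ∀ p ∈ (Iset n (w * t)) ∩ (Iset n t),
      gMap n t p ∈ (Iset n t) \ (Iset n w) := by
    intro p hp
    obtain ⟨hpA, hpR⟩ := hp
    obtain ⟨h1, h2, h3, h4⟩ := mem_iset.1 hpA
    rw [Equiv.Perm.mul_apply, Equiv.Perm.mul_apply] at h4
    have hrev : t p.2 < t p.1 := (mem_iset.1 hpR).2.2.2
    have hsd := red_sub_dvd n (t p.2)
    have e : gMap n t p = (t p.2 + (redI n (t p.2) - t p.2),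
        t p.1 + (redI n (t p.2) - t p.2)) := nrmP_eq n _ _
    obtain ⟨hf1, hf2, hf3⟩ := nrm_mem_frame hn (t p.2) (t p.1) hrev
    constructor
    · refine mem_iset.2 ⟨hf1, hf2, hf3, ?_⟩
      show t (gMap n t p).2 < t (gMap n t p).1
      rw [e]
      show t (t p.1 + _) < t (t p.2 + _)
      rw [per_shift ht hsd, per_shift ht hsd, htt p.1, htt p.2]
      omega
    · intro hc
      have h5 := (mem_iset.1 hc).2.2.2
      rw [e] at h5
      have : w (t p.1 + (redI n (t p.2) - t p.2)) < w (t p.2 + (redI n (t p.2) - t p.2)) := h5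
      rw [per_shift hw hsd, per_shift hw hsd] at this
      omega
  have B2' : ∀ q ∈ (Iset n t) \ (Iset n w),
      gMap n t q ∈ (Iset n (w * t)) ∩ (Iset n t) := by
    intro q hq
    obtain ⟨hqR, hqS⟩ := hq
    obtain ⟨h1, h2, h3, h4⟩ := mem_iset.1 hqR
    have hS' : ¬ (w q.2 < w q.1) := fun hc => hqS (mem_iset.2 ⟨h1, h2, h3, hc⟩)
    have hwlt : w q.1 < w q.2 := by
      rcases lt_or_eq_of_le (not_lt.1 hS') with h' | h'
      · exact h'
      · exact absurd (w.injective h') (by omega)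
    have hsd := red_sub_dvd n (t q.2)
    have e : gMap n t q = (t q.2 + (redI n (t q.2) - t q.2),
        t q.1 + (redI n (t q.2) - t q.2)) := nrmP_eq n _ _
    obtain ⟨hf1, hf2, hf3⟩ := nrm_mem_frame hn (t q.2) (t q.1) h4
    constructor
    · refine mem_iset.2 ⟨hf1, hf2, hf3, ?_⟩
      show w (t (gMap n t q).2) < w (t (gMap n t q).1)
      rw [e]
      show w (t (t q.1 + _)) < w (t (t q.2 + _))
      rw [per_shift ht hsd, per_shift ht hsd, htt q.1, htt q.2,
        per_shift hw hsd, per_shift hw hsd]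
      omega
    · refine mem_iset.2 ⟨hf1, hf2, hf3, ?_⟩
      show t (gMap n t q).2 < t (gMap n t q).1
      rw [e]
      show t (t q.1 + _) < t (t q.2 + _)
      rw [per_shift ht hsd, per_shift ht hsd, htt q.1, htt q.2]
      omega
  -- cardinalities
  have e1 : ((Iset n (w * t)) \ (Iset n t)).ncard = ((Iset n w) \ (Iset n t)).ncard := by
    apply ncard_bij (fMap n t) (fMap n t) (B1 w hw) ?_ ?_ ?_
    · intro q hq
      have h := B1' w hw q hq
      exact h
    · intro p hp
      exact Cf p (mem_iset.1 hp.1).1 (mem_iset.1 hp.1).2.1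
    · intro q hq
      exact Cf q (mem_iset.1 hq.1).1 (mem_iset.1 hq.1).2.1
  have e2 : ((Iset n (w * t)) ∩ (Iset n t)).ncard = ((Iset n t) \ (Iset n w)).ncard := by
    apply ncard_bij (gMap n t) (gMap n t) B2 B2' ?_ ?_
    · intro p hp
      exact Cg p (mem_iset.1 hp.1).1 (mem_iset.1 hp.1).2.1
    · intro q hq
      exact Cg q (mem_iset.1 hq.1).1 (mem_iset.1 hq.1).2.1
  have d1 := Set.ncard_inter_add_ncard_diff_eq_ncard (Iset n (w * t)) (Iset n t) hA
  have d2 := Set.ncard_inter_add_ncard_diff_eq_ncard (Iset n w) (Iset n t) hS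
  have d3 := Set.ncard_inter_add_ncard_diff_eq_ncard (Iset n t) (Iset n w) hR
  have hcomm : ((Iset n t) ∩ (Iset n w)).ncard = ((Iset n w) ∩ (Iset n t)).ncard := by
    rw [Set.inter_comm]
  omega

end AffProof
namespace AffProof

lemma nd_small {n : ℕ} {m : ℤ} (h1 : 0 < m) (h2 : m < n) : ¬ (n:ℤ) ∣ m := by
  intro hc
  have := Int.le_of_dvd h1 hc
  omega

lemma dvd_zero_small {n : ℕ} {m : ℤ} (h : (n:ℤ) ∣ m) (h1 : -(n:ℤ) < m) (h2 : m < n) :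
    m = 0 := by
  by_contra hne
  rcases lt_or_gt_of_ne hne with hm | hm
  · have : (n:ℤ) ∣ -m := dvd_neg.2 h
    have := Int.le_of_dvd (by omega) this
    omega
  · have := Int.le_of_dvd hm h
    omega

lemma dvd_shift' {n : ℕ} {s : ℤ} (hs : (n:ℤ) ∣ s) (x y : ℤ) :
    (n:ℤ) ∣ (x + s - y) ↔ (n:ℤ) ∣ (x - y) := by
  constructor
  · intro hc
    have h2 := dvd_sub hc hs
    have e : x + s - y - s = x - y := by ring
    rwa [e] at h2
  · intro hc
    have h2 := dvd_add hc hs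
    have e : x - y + s = x + s - y := by ring
    rwa [e] at h2

/-- the enumeration of reversed inversions -/
lemma inter_card {n : ℕ} {w : Equiv.Perm ℤ} (hn : 0 < n) (hw : Per n w) {i j : ℤ}
    (hij : i < j) (hjn : j - i < n) (hnd : ¬ (n:ℤ) ∣ j - i) :
    ((Iset n w) ∩ (Iset n (tPerm n i j))).ncard
      = (if w j < w i then 1 else 0)
        + ((Finset.Ioo i j).filter (fun k => w k < w i)).card
        + ((Finset.Ioo i j).filter (fun k => w j < w k)).card := by
  set t := tPerm n i j with hts
  have ht : Per n t := per_t n i j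
  set s : ℤ := redI n i - i with hss
  have hsd : (n:ℤ) ∣ s := red_sub_dvd n i
  have hi1 : 1 ≤ i + s := by have := red_ge hn i; omega
  have hi2 : i + s ≤ n := by have := red_le hn i; omega
  -- basic class facts for k ∈ Ioo i j
  have hkio : ∀ k, i < k → k < j → ¬ (n:ℤ) ∣ k - i ∧ ¬ (n:ℤ) ∣ k - j := by
    intro k h1 h2
    constructor
    · exact nd_small (by omega) (by omega)
    · intro hc
      have : (n:ℤ) ∣ j - k := by
        have := dvd_neg.2 hc
        simpa [neg_sub] using this
      exact nd_small (by omega) (by omega) this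
  -- evaluations of t
  have hti : t (i + s) = j + s := by
    have : (n:ℤ) ∣ (i + s) - i := by simpa using hsd
    rw [tP_i this]; ring
  have htj : ∀ s' : ℤ, (n:ℤ) ∣ s' → t (j + s') = i + s' := by
    intro s' hs'
    have h1 : ¬ (n:ℤ) ∣ (j + s') - i := by
      rw [dvd_shift' hs']
      intro hc; exact hnd (by simpa using hc)
    have h2 : (n:ℤ) ∣ (j + s') - j := by simpa using hs'
    rw [tP_j h1 h2]; ring
  have htk : ∀ k s' : ℤ, (n:ℤ) ∣ s' → ¬ (n:ℤ) ∣ k - i → ¬ (n:ℤ) ∣ k - j → t (k + s') = k + s' := by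
    intro k s' hs' hk1 hk2
    exact tP_o (by rwa [dvd_shift' hs']) (by rwa [dvd_shift' hs'])
  -- the three pieces
  set S0 : Set (ℤ × ℤ) := if w j < w i then {(i + s, j + s)} else ∅ with hS0
  set S1 : Set (ℤ × ℤ) :=
    (fun k => (i + s, k + s)) '' ((Finset.Ioo i j).filter (fun k => w k < w i) : Set ℤ) with hS1
  set S2 : Set (ℤ × ℤ) :=
    (fun k => (k + (redI n k - k), j + (redI n k - k))) ''
      ((Finset.Ioo i j).filter (fun k => w j < w k) : Set ℤ) with hS2
  have hsplit : (Iset n w) ∩ (Iset n t) = S0 ∪ S1 ∪ S2 := by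
    apply Set.Subset.antisymm
    · rintro ⟨α, β⟩ ⟨hpw, hpt⟩
      obtain ⟨h1, h2, h3, h4⟩ := mem_iset.1 hpw
      have hrev : t β < t α := (mem_iset.1 hpt).2.2.2
      simp only at h1 h2 h3 h4 hrev
      by_cases hα : (n:ℤ) ∣ α - i
      · -- α in class i
        have hαs : α = i + s := by
          have h5 : redI n α = redI n i := red_congr hα
          rw [red_self h1 h2] at h5
          omega
        have htα : t α = j + s := by rw [hαs]; exact hti
        by_cases hβ : (n:ℤ) ∣ β - j
        · -- the single pair
          left; left
          have hβi : ¬ (n:ℤ) ∣ β - i := by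
            intro hc
            have h5 := dvd_sub hc hβ
            have e : β - i - (β - j) = j - i := by ring
            rw [e] at h5; exact hnd h5
          have htβ : t β = β - (j - i) := tP_j hβi hβ
          have hd : (n:ℤ) ∣ (β - α) - (j - i) := by
            have h5 := dvd_sub hβ hα
            have e : β - j - (α - i) = β - α - (j - i) := by ring
            rwa [e] at h5
            
          have hβs : β = j + s := by
            have h6 : β - α - (j - i) = 0 := by
              apply dvd_zero_small hd <;> omega
            omega
          have hwji : w j < w i := by
            have e1 : w β = w j + s := by rw [hβs]; exact per_shift hw hsd j
            have e2 : w α = w i + s := by rw [hαs]; exact per_shift hw hsd i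
            omega
          rw [hS0, if_pos hwji]
          simp [hαs, hβs]
        · -- family 1
          left; right
          rw [hS1]
          have hβi : ¬ (n:ℤ) ∣ β - i := by
            intro hc
            rw [tP_i hc, htα] at hrev
            omega
          have htβ : t β = β := tP_o hβi hβ
          refine ⟨β - s, ?_, ?_⟩
          · have hki : i < β - s := by omega
            have hkj : β - s < j := by rw [htβ, htα] at hrev; omega
            have hwk : w (β - s) < w i := by
              have e1 : w ((β - s) + s) = w (β - s) + s := per_shift hw hsd _
              have e2 : w α = w i + s := by rw [hαs]; exact per_shift hw hsd i
              have e3 : β - s + s = β := by ring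
              rw [e3] at e1
              omega
            simp only [Finset.coe_filter, Set.mem_setOf_eq, Finset.mem_Ioo]
            exact ⟨⟨hki, hkj⟩, hwk⟩
          · simp only
            rw [hαs]
            congr 1
            ring
      · -- family 2
        right
        rw [hS2]
        have hαj : ¬ (n:ℤ) ∣ α - j := by
          intro hc
          have htα : t α = α - (j - i) := tP_j hα hc
          -- all possible t β lead to contradiction
          by_cases hβi : (n:ℤ) ∣ β - i
          · rw [tP_i hβi, htα] at hrev; omega
          · by_cases hβj : (n:ℤ) ∣ β - j
            · rw [tP_j hβi hβj, htα] at hrev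
              omega
            · rw [tP_o hβi hβj, htα] at hrev; omega
        have htα : t α = α := tP_o hα hαj
        have hβj : (n:ℤ) ∣ β - j := by
          by_contra hβj
          by_cases hβi : (n:ℤ) ∣ β - i
          · rw [tP_i hβi, htα] at hrev; omega
          · rw [tP_o hβi hβj, htα] at hrev; omega
        have hβi : ¬ (n:ℤ) ∣ β - i := by
          intro hc
          have h5 := dvd_sub hβj hc
          have e : β - j - (β - i) = -(j - i) := by ring
          rw [e] at h5
          exact hnd (by simpa using (dvd_neg.2 h5))
        have htβ : t β = β - (j - i) := tP_j hβi hβj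
        set s' : ℤ := β - j with hs'
        have hs'd : (n:ℤ) ∣ s' := by simpa using hβj
        refine ⟨α - s', ?_, ?_⟩
        · have hki : i < α - s' := by rw [htβ, htα] at hrev; omega
          have hkj : α - s' < j := by omega
          have hwk : w j < w (α - s') := by
            have e1 : w ((α - s') + s') = w (α - s') + s' := per_shift hw hs'd _
            have e2 : w (j + s') = w j + s' := per_shift hw hs'd j
            have e3 : α - s' + s' = α := by ring
            have e4 : j + s' = β := by omega
            rw [e3] at e1
            rw [e4] at e2
            omega
          simp only [Finset.coe_filter, Set.mem_setOf_eq, Finset.mem_Ioo]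
          exact ⟨⟨hki, hkj⟩, hwk⟩
        · have hred : redI n (α - s') = α := by
            rw [red_congr (x := α - s') (y := α) (by simpa using (dvd_neg.2 hs'd))]
            exact red_self h1 h2
          simp only [hred]
          have e5 : α - s' + (α - (α - s')) = α := by ring
          have e6 : j + (α - (α - s')) = β := by omega
          rw [e5, e6]
    · -- backward inclusion
      rintro p hp
      rcases hp with (hp | hp) | hp
      · -- S0
        rw [hS0] at hp
        by_cases hwji : w j < w i
        · rw [if_pos hwji] at hp
          rw [Set.mem_singleton_iff] at hp
          subst hp
          constructor
          · refine mem_iset.2 ⟨hi1, hi2, by omega, ?_⟩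
            show w (j + s) < w (i + s)
            rw [per_shift hw hsd j, per_shift hw hsd i]
            omega
          · refine mem_iset.2 ⟨hi1, hi2, by omega, ?_⟩
            show t (j + s) < t (i + s)
            rw [hti, htj s hsd]
            omega
        · rw [if_neg hwji] at hp
          exact absurd hp (Set.notMem_empty _)
      · -- S1
        rw [hS1] at hp
        obtain ⟨k, hk, rfl⟩ := hp
        simp only [Finset.coe_filter, Set.mem_setOf_eq, Finset.mem_Ioo] at hk
        obtain ⟨⟨hk1, hk2⟩, hwk⟩ := hk
        obtain ⟨hnd1, hnd2⟩ := hkio k hk1 hk2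
        constructor
        · refine mem_iset.2 ⟨hi1, hi2, by simp only; omega, ?_⟩
          show w (k + s) < w (i + s)
          rw [per_shift hw hsd k, per_shift hw hsd i]
          omega
        · refine mem_iset.2 ⟨hi1, hi2, by simp only; omega, ?_⟩
          show t (k + s) < t (i + s)
          rw [hti, htk k s hsd hnd1 hnd2]
          omega
      · -- S2
        rw [hS2] at hp
        obtain ⟨k, hk, rfl⟩ := hp
        simp only [Finset.coe_filter, Set.mem_setOf_eq, Finset.mem_Ioo] at hk
        obtain ⟨⟨hk1, hk2⟩, hwk⟩ := hk
        obtain ⟨hnd1, hnd2⟩ := hkio k hk1 hk2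
        have hskd : (n:ℤ) ∣ redI n k - k := red_sub_dvd n k
        constructor
        · refine mem_iset.2 ⟨by have := red_ge hn k; simp only; omega,
            by have := red_le hn k; simp only; omega, by simp only; omega, ?_⟩
          show w (j + (redI n k - k)) < w (k + (redI n k - k))
          rw [per_shift hw hskd j, per_shift hw hskd k]
          omega
        · refine mem_iset.2 ⟨by have := red_ge hn k; simp only; omega,
            by have := red_le hn k; simp only; omega, by simp only; omega, ?_⟩
          show t (j + (redI n k - k)) < t (k + (redI n k - k))
          rw [htj _ hskd, htk k _ hskd hnd1 hnd2]
          omega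
  rw [hsplit]
  -- cardinalities
  have hfin0 : S0.Finite := by
    rw [hS0]; split <;> simp
  have hfin1 : S1.Finite := Set.Finite.image _ (Finset.finite_toSet _)
  have hfin2 : S2.Finite := Set.Finite.image _ (Finset.finite_toSet _)
  have hinj1 : Set.InjOn (fun k : ℤ => (i + s, k + s))
      ((Finset.Ioo i j).filter (fun k => w k < w i) : Set ℤ) := by
    intro a _ b _ hab
    simp only [Prod.mk.injEq] at hab
    omega
  have hinj2 : Set.InjOn (fun k : ℤ => (k + (redI n k - k), j + (redI n k - k)))
      ((Finset.Ioo i j).filter (fun k => w j < w k) : Set ℤ) := by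
    intro a _ b _ hab
    simp only [Prod.mk.injEq] at hab
    omega
  have hd01 : Disjoint S0 S1 := by
    rw [Set.disjoint_left]
    intro p hp0 hp1
    rw [hS0] at hp0
    rw [hS1] at hp1
    obtain ⟨k, hk, rfl⟩ := hp1
    simp only [Finset.coe_filter, Set.mem_setOf_eq, Finset.mem_Ioo] at hk
    split at hp0
    · rw [Set.mem_singleton_iff, Prod.mk.injEq] at hp0
      have : k = j := by omega
      omega
    · exact absurd hp0 (Set.notMem_empty _)
  have hd02 : Disjoint (S0 ∪ S1) S2 := by
    rw [Set.disjoint_left]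
    intro p hp0 hp2
    rw [hS2] at hp2
    obtain ⟨k, hk, rfl⟩ := hp2
    simp only [Finset.coe_filter, Set.mem_setOf_eq, Finset.mem_Ioo] at hk
    have hkc : ¬ (n:ℤ) ∣ k - i := (hkio k hk.1.1 hk.1.2).1
    have hfst : (n:ℤ) ∣ (k + (redI n k - k)) - (i + s) → False := by
      intro hc
      apply hkc
      have h5 : (n:ℤ) ∣ redI n k - k := red_sub_dvd n k
      have h6 := dvd_sub (dvd_sub hc h5) hsd
      have e : k + (redI n k - k) - (i + s) - (redI n k - k) - s  = k - i - 2*s := by ring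
      rw [e] at h6
      have h7 := dvd_add h6 (Dvd.dvd.mul_left hsd 2)
      have e2 : k - i - 2*s + 2*s = k - i := by ring
      rwa [e2] at h7
    rcases hp0 with hp0 | hp0
    · rw [hS0] at hp0
      split at hp0
      · rw [Set.mem_singleton_iff, Prod.mk.injEq] at hp0
        exact hfst (by rw [hp0.1]; simp)
      · exact absurd hp0 (Set.notMem_empty _)
    · rw [hS1] at hp0
      obtain ⟨k', hk', heq⟩ := hp0
      simp only [Prod.mk.injEq] at heq
      exact hfst (by rw [← heq.1]; simp)
  rw [Set.ncard_union_eq hd02 (hfin0.union hfin1) hfin2,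
    Set.ncard_union_eq hd01 hfin0 hfin1]
  have hc0 : S0.ncard = if w j < w i then 1 else 0 := by
    rw [hS0]; split <;> simp
  have hc1 : S1.ncard = ((Finset.Ioo i j).filter (fun k => w k < w i)).card := by
    rw [hS1, Set.ncard_image_of_injOn hinj1, Set.ncard_coe_finset]
  have hc2 : S2.ncard = ((Finset.Ioo i j).filter (fun k => w j < w k)).card := by
    rw [hS2, Set.ncard_image_of_injOn hinj2, Set.ncard_coe_finset]
  omega

end AffProof
namespace AffProof

/-- length of the reflection itself -/
lemma R_card {n : ℕ} {i j : ℤ} (hn : 0 < n) (hij : i < j) (hjn : j - i < n)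
    (hnd : ¬ (n:ℤ) ∣ j - i) :
    (Iset n (tPerm n i j)).ncard = 1 + 2 * (Finset.Ioo i j).card := by
  have h := inter_card hn (per_t n i j) hij hjn hnd
  rw [Set.inter_self] at h
  set t := tPerm n i j with hts
  have hti : t i = j := by
    have : t i = i + (j - i) := tP_i (by simp)
    omega
  have htj : t j = i := by
    have : t j = j - (j - i) := tP_j (fun hc => hnd (by simpa using hc)) (by simp)
    omega
  have htk : ∀ k, i < k → k < j → t k = k := by
    intro k h1 h2
    refine tP_o (nd_small (by omega) (by omega)) ?_
    intro hc
    have : (n:ℤ) ∣ j - k := by simpa [neg_sub] using (dvd_neg.2 hc)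
    exact nd_small (by omega) (by omega) this
  rw [h, if_pos (by omega : t j < t i)]
  rw [Finset.filter_true_of_mem (fun k hk => by
    rw [Finset.mem_Ioo] at hk
    rw [htk k hk.1 hk.2, hti]; omega)]
  rw [Finset.filter_true_of_mem (fun k hk => by
    rw [Finset.mem_Ioo] at hk
    rw [htk k hk.1 hk.2, htj]; omega)]
  omega

/-- the combinatorial crux, right-endpoint case -/
lemma crux1 {n : ℕ} {z : Equiv.Perm ℤ} (hn : 0 < n) (hz : Per n z)
    (hinv : ∀ x : ℤ, z (z x) = x) {i j : ℤ} (hij : i < j) (hjn : j - i < n)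
    (hnd : ¬ (n:ℤ) ∣ j - i) (hend : ∀ e : ℤ, i ≤ e → e < j → z e < e) :
    (((if z j < z i then 1 else 0)
        + ((Finset.Ioo i j).filter (fun k => z k < z i)).card
        + ((Finset.Ioo i j).filter (fun k => z j < z k)).card)
      + ((if (tPerm n i j * z) j < (tPerm n i j * z) i then 1 else 0)
        + ((Finset.Ioo i j).filter (fun k => (tPerm n i j * z) k < (tPerm n i j * z) i)).card
        + ((Finset.Ioo i j).filter (fun k => (tPerm n i j * z) j < (tPerm n i j * z) k)).card)
      = 2 * (Finset.Ioo i j).card)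
    ↔ ((if z j < z i then 1 else 0)
        + ((Finset.Ioo i j).filter (fun k => z k < z i)).card
        + ((Finset.Ioo i j).filter (fun k => z j < z k)).card)
      = (Finset.Ioo i j).card := by
  set t := tPerm n i j with hts
  simp only [Equiv.Perm.mul_apply]
  set N := (Finset.Ioo i j).card with hN
  -- basic endpoint facts
  have ha : z i < i := hend i le_rfl hij
  have hEnd' : ∀ x e : ℤ, i ≤ e → e < j → (n:ℤ) ∣ x - e → z x < x := by
    intro x e h1 h2 hd
    have := per_dvd hz hd
    have := hend e h1 h2
    omega
  have hzj2 : z (z j) = j := hinv j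
  have hzi2 : z (z i) = i := hinv i
  -- class facts
  have hai : ¬ (n:ℤ) ∣ z i - i := by
    intro hc
    have h5 := per_dvd hz (x := i) (y := z i) hc
    rw [hzi2] at h5
    omega
  have hzklt : ∀ k, i < k → k < j → z k < i := by
    intro k h1 h2
    have h3 : z k < k := hend k (by omega) h2
    have h4 : z k ≠ i := by
      intro hc
      have := hinv k
      rw [hc] at this
      have : z i = k := by rw [← this]
      omega
    by_contra hcon
    push_neg at hcon
    have h5 : i < z k := by omega
    have := hEnd' (z k) (z k) (by omega) (by omega) (by simp)
    have := hinv k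
    omega
  have hzki : ∀ k, i < k → k < j → ¬ (n:ℤ) ∣ z k - i := by
    intro k h1 h2 hc
    have h5 := per_dvd hz (x := i) (y := z k) hc
    rw [hinv k] at h5
    have := hzklt k h1 h2
    omega
  -- z k ≡ j forces z j large
  have hzkj : ∀ k, i < k → k < j → (n:ℤ) ∣ z k - j → z j ≥ k + n := by
    intro k h1 h2 hc
    have h5 := per_dvd hz (x := j) (y := z k) hc
    rw [hinv k] at h5
    -- k = z j + (z k - j)
    have h6 : z k - j < 0 := by have := hzklt k h1 h2; omega
    have h7 : (n:ℤ) ∣ j - z k := by simpa [neg_sub] using (dvd_neg.2 hc)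
    have h8 := Int.le_of_dvd (by omega) h7
    omega
  -- uniqueness of k with z k ≡ j
  have huniq : ∀ k k', i < k → k < j → i < k' → k' < j →
      (n:ℤ) ∣ z k - j → (n:ℤ) ∣ z k' - j → k = k' := by
    intro k k' h1 h2 h1' h2' hc hc'
    have h5 := per_dvd hz (x := j) (y := z k) hc
    have h5' := per_dvd hz (x := j) (y := z k') hc'
    rw [hinv k] at h5
    rw [hinv k'] at h5'
    have h6 : (n:ℤ) ∣ (z k - j) - (z k' - j) := dvd_sub hc hc'
    have h7 : k - k' = (z k - j) - (z k' - j) := by omega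
    have := dvd_zero_small (h7 ▸ h6) (by omega) (by omega)
    omega
  -- a ≡ j relations
  have haj_b : (n:ℤ) ∣ z i - j → z j = i + j - z i ∧ z j ≥ i + n := by
    intro hc
    have h5 := per_dvd hz (x := j) (y := z i) hc
    rw [hzi2] at h5
    have h6 : (n:ℤ) ∣ j - z i := by simpa [neg_sub] using (dvd_neg.2 hc)
    have h8 := Int.le_of_dvd (by omega) h6
    constructor <;> omega
  have hbi_b : (n:ℤ) ∣ z j - i → z i = i + j - z j := by
    intro hc
    have h5 := per_dvd hz (x := i) (y := z j) hc
    rw [hzj2] at h5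
    omega
  have hbj_b : (n:ℤ) ∣ z j - j → z j = j := by
    intro hc
    have h5 := per_dvd hz (x := j) (y := z j) hc
    rw [hzj2] at h5
    omega
  -- trichotomy on z j
  rcases lt_trichotomy (z j) j with hb | hb | hb
  · -- case (III) : z j < j, hence z j < i
    have hbi : z j < i := by
      by_contra hcon
      push_neg at hcon
      have := hend (z j) hcon (by omega)
      omega
    have hbndj : ¬ (n:ℤ) ∣ z j - j := fun hc => by have := hbj_b hc; omega
    have hbndi : ¬ (n:ℤ) ∣ z j - i := fun hc => by have := hbi_b hc; omega
    have handj : ¬ (n:ℤ) ∣ z i - j := fun hc => by have := (haj_b hc).2; omega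
    have hta : t (z i) = z i := tP_o hai handj
    have htb : t (z j) = z j := tP_o hbndi hbndj
    have htk : ∀ k, i < k → k < j → t (z k) = z k := by
      intro k h1 h2
      refine tP_o (hzki k h1 h2) ?_
      intro hc
      have := hzkj k h1 h2 hc
      omega
    have e1 : (if t (z j) < t (z i) then 1 else 0) = (if z j < z i then 1 else 0) := by
      rw [hta, htb]
    have e2 : (Finset.Ioo i j).filter (fun k => t (z k) < t (z i))
        = (Finset.Ioo i j).filter (fun k => z k < z i) := by
      apply Finset.filter_congr
      intro k hk
      rw [Finset.mem_Ioo] at hk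
      rw [htk k hk.1 hk.2, hta]
    have e3 : (Finset.Ioo i j).filter (fun k => t (z j) < t (z k))
        = (Finset.Ioo i j).filter (fun k => z j < z k) := by
      apply Finset.filter_congr
      intro k hk
      rw [Finset.mem_Ioo] at hk
      rw [htk k hk.1 hk.2, htb]
    erw [e1, e2, e3]
    omega
  · -- case (I) : z j = j
    have handj : ¬ (n:ℤ) ∣ z i - j := fun hc => by have := (haj_b hc).2; omega
    have hta : t (z i) = z i := tP_o hai handj
    have htb : t (z j) = i := by
      rw [hb]
      have : t j = j - (j - i) := tP_j (fun hc => hnd (by simpa using hc)) (by simp)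
      omega
    have htk : ∀ k, i < k → k < j → t (z k) = z k := by
      intro k h1 h2
      refine tP_o (hzki k h1 h2) ?_
      intro hc
      have := hzkj k h1 h2 hc
      omega
    have e1 : (if z j < z i then 1 else 0) = 0 := by
      rw [if_neg (by omega)]
    have e1' : (if t (z j) < t (z i) then 1 else 0) = 0 := by
      rw [htb, hta, if_neg (by omega)]
    have e3 : (Finset.Ioo i j).filter (fun k => z j < z k) = ∅ := by
      apply Finset.filter_false_of_mem
      intro k hk
      rw [Finset.mem_Ioo] at hk
      have := hzklt k hk.1 hk.2
      omega
    have e3' : (Finset.Ioo i j).filter (fun k => t (z j) < t (z k)) = ∅ := by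
      apply Finset.filter_false_of_mem
      intro k hk
      rw [Finset.mem_Ioo] at hk
      rw [htb, htk k hk.1 hk.2]
      have := hzklt k hk.1 hk.2
      omega
    have e2 : (Finset.Ioo i j).filter (fun k => t (z k) < t (z i))
        = (Finset.Ioo i j).filter (fun k => z k < z i) := by
      apply Finset.filter_congr
      intro k hk
      rw [Finset.mem_Ioo] at hk
      rw [htk k hk.1 hk.2, hta]
    erw [e1, e1', e2, e3, e3']
    simp only [Finset.card_empty]
    omega
  · -- case (II) : z j > j
    have e1 : (if z j < z i then 1 else 0) = 0 := by
      rw [if_neg (by omega)]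
    have e3 : (Finset.Ioo i j).filter (fun k => z j < z k) = ∅ := by
      apply Finset.filter_false_of_mem
      intro k hk
      rw [Finset.mem_Ioo] at hk
      have := hzklt k hk.1 hk.2
      omega
    have hbndj : ¬ (n:ℤ) ∣ z j - j := fun hc => by have := hbj_b hc; omega
    have htb : z j ≤ t (z j) := by
      by_cases hbi : (n:ℤ) ∣ z j - i
      · rw [tP_i hbi]; omega
      · rw [tP_o hbi hbndj]
    have hta_le : t (z i) ≤ z i := by
      by_cases haj' : (n:ℤ) ∣ z i - j
      · rw [tP_j hai haj']; omega
      · rw [tP_o hai haj']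
    have htk_le : ∀ k, i < k → k < j → t (z k) ≤ z k := by
      intro k h1 h2
      by_cases hc : (n:ℤ) ∣ z k - j
      · rw [tP_j (hzki k h1 h2) hc]; omega
      · rw [tP_o (hzki k h1 h2) hc]
    have e1' : (if t (z j) < t (z i) then 1 else 0) = 0 := by
      rw [if_neg (by omega)]
    have e3' : (Finset.Ioo i j).filter (fun k => t (z j) < t (z k)) = ∅ := by
      apply Finset.filter_false_of_mem
      intro k hk
      rw [Finset.mem_Ioo] at hk
      have h5 := htk_le k hk.1 hk.2
      have := hzklt k hk.1 hk.2
      omega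
    erw [e1, e1', e3, e3']
    simp only [Finset.card_empty]
    by_cases haj : (n:ℤ) ∣ z i - j
    · -- a ≡ j : no middle interference
      have hta : t (z i) = z i - (j - i) := tP_j hai haj
      have hjb := haj_b haj
      have h8 : (n:ℤ) ∣ z j - i := by
        have h10 : z j - i = j - z i := by omega
        rw [h10]
        simpa [neg_sub] using (dvd_neg.2 haj)
      have htk : ∀ k, i < k → k < j → t (z k) = z k := by
        intro k h1 h2
        refine tP_o (hzki k h1 h2) ?_
        intro hc
        have h5 := per_dvd hz (x := j) (y := z k) hc
        rw [hinv k] at h5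
        have h11 : (n:ℤ) ∣ k - i := by
          have h12 := dvd_add h8 hc
          have e : z j - i + (z k - j) = k - i := by omega
          rwa [e] at h12
        exact nd_small (by omega) (by omega) h11
      have e2 : (Finset.Ioo i j).filter (fun k => t (z k) < t (z i))
          = (Finset.Ioo i j).filter (fun k => z k < z i) := by
        apply Finset.filter_congr
        intro k hk
        rw [Finset.mem_Ioo] at hk
        rw [htk k hk.1 hk.2, hta]
        constructor
        · intro h5; omega
        · intro h5
          by_contra hcon
          push_neg at hcon
          -- z k ∈ [z i - (j-i), z i) : residue forces a contradiction
          have hd : (n:ℤ) ∣ (z k) - (z k - (z i - j)) := by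
            have e : (z k) - (z k - (z i - j)) = z i - j := by ring
            rw [e]; exact haj
          have h6 := hEnd' (z k) (z k - (z i - j)) (by omega) (by omega) hd
          have h7 := hzklt k hk.1 hk.2
          have h9 := per_dvd hz (x := z k - (z i - j)) (y := z k) hd
          have hk3 := hinv k
          omega
      erw [e2]
      omega
    · -- a ≢ j
      have hta : t (z i) = z i := tP_o hai haj
      have hne : ∀ k, i < k → k < j → z k ≠ z i := by
        intro k h1 h2 hc
        have : k = i := by
          have e1 := hinv k
          have e2 := hinv i
          rw [hc] at e1
          omega
        omega
      by_cases hEx : ∃ k, (i < k ∧ k < j) ∧ (n:ℤ) ∣ z k - j ∧ z i < z k ∧ z k < z i + (j - i)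
      · obtain ⟨k₀, ⟨hk01, hk02⟩, hk0d, hk0a, hk0b⟩ := hEx
        have hnotmem : k₀ ∉ (Finset.Ioo i j).filter (fun k => z k < z i) := by
          simp only [Finset.mem_filter, Finset.mem_Ioo]
          push_neg
          intro _
          omega
        have hins : (Finset.Ioo i j).filter (fun k => t (z k) < t (z i))
            = insert k₀ ((Finset.Ioo i j).filter (fun k => z k < z i)) := by
          ext k
          simp only [Finset.mem_insert, Finset.mem_filter, Finset.mem_Ioo]
          constructor
          · rintro ⟨⟨h1, h2⟩, h3⟩
            by_cases hc : (n:ℤ) ∣ z k - j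
            · left; exact huniq k k₀ h1 h2 hk01 hk02 hc hk0d
            · right
              refine ⟨⟨h1, h2⟩, ?_⟩
              rwa [tP_o (hzki k h1 h2) hc, hta] at h3
          · rintro (rfl | ⟨⟨h1, h2⟩, h3⟩)
            · refine ⟨⟨hk01, hk02⟩, ?_⟩
              rw [tP_j (hzki _ hk01 hk02) hk0d, hta]
              omega
            · refine ⟨⟨h1, h2⟩, ?_⟩
              by_cases hc : (n:ℤ) ∣ z k - j
              · have hkk : k = k₀ := huniq k k₀ h1 h2 hk01 hk02 hc hk0d
                exfalso
                subst hkk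
                omega
              · rw [tP_o (hzki k h1 h2) hc, hta]
                exact h3
        have hcard := Finset.card_insert_of_notMem hnotmem
        erw [hins, hcard]
        have hsub : (Finset.Ioo i j).filter (fun k => z k < z i) ⊂ Finset.Ioo i j := by
          rw [Finset.ssubset_iff_of_subset (Finset.filter_subset _ _)]
          exact ⟨k₀, Finset.mem_Ioo.2 ⟨hk01, hk02⟩, hnotmem⟩
        have hlt := Finset.card_lt_card hsub
        omega
      · push_neg at hEx
        have e2 : (Finset.Ioo i j).filter (fun k => t (z k) < t (z i))
            = (Finset.Ioo i j).filter (fun k => z k < z i) := by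
          apply Finset.filter_congr
          intro k hk
          rw [Finset.mem_Ioo] at hk
          rw [hta]
          by_cases hc : (n:ℤ) ∣ z k - j
          · rw [tP_j (hzki k hk.1 hk.2) hc]
            have h5 := hne k hk.1 hk.2
            rcases lt_or_gt_of_ne h5 with h6 | h6
            · constructor <;> intro <;> omega
            · have h7 := hEx k ⟨hk.1, hk.2⟩ hc h6
              constructor <;> intro <;> omega
          · rw [tP_o (hzki k hk.1 hk.2) hc]
        erw [e2]
        omega

end AffProof

namespace AffProof

lemma main1 {n : ℕ} {z : Equiv.Perm ℤ} (hn : 0 < n) (hz : Per n z)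
    (hinv : ∀ x : ℤ, z (z x) = x) {i j : ℤ} (hij : i < j)
    (hnd : ¬ (n:ℤ) ∣ j - i) (hend : ∀ e : ℤ, i ≤ e → e < j → z e < e) :
    affLen n (tPerm n i j * z * tPerm n i j) = affLen n z + 2 ↔
      affLen n (z * tPerm n i j) = affLen n z + 1 := by
  have hjn : j - i < n := by
    by_contra hcon
    push_neg at hcon
    have hall : ∀ x : ℤ, z x < x := by
      intro x
      have hnz : (n:ℤ) ≠ 0 := by exact_mod_cast hn.ne'
      have h1 : 0 ≤ (x - i) % (n:ℤ) := Int.emod_nonneg _ hnz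
      have h2 : (x - i) % (n:ℤ) < n := Int.emod_lt_of_pos _ (by exact_mod_cast hn)
      have hd : (n:ℤ) ∣ x - (i + (x - i) % (n:ℤ)) := by
        have h3 := Int.emod_add_mul_ediv (x - i) (n:ℤ)
        exact ⟨(x - i) / n, by linarith⟩
      have h4 := per_dvd hz hd
      have h5 := hend (i + (x - i) % (n:ℤ)) (by omega) (by omega)
      omega
    have c1 := hall (z i)
    rw [hinv i] at c1
    have c2 := hall i
    omega
  have ht : Per n (tPerm n i j) := per_t n i j
  have htz : Per n (tPerm n i j * z) := per_mul ht hz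
  have hzt : Per n (z * tPerm n i j) := per_mul hz ht
  have k1 := key_mul hn hz hnd
  have k2 := key_mul hn htz hnd
  have hzinv : z⁻¹ = z := inv_eq_of_mul_eq_one_right (Equiv.ext fun x => hinv x)
  have htinv : (tPerm n i j)⁻¹ = tPerm n i j :=
    inv_eq_of_mul_eq_one_right (Equiv.ext fun x => t_invol hnd x)
  have hswap : (Iset n (tPerm n i j * z)).ncard = (Iset n (z * tPerm n i j)).ncard := by
    have h := ncard_inv hn hzt
    rw [mul_inv_rev, hzinv, htinv] at h
    exact h.symm
  have c1 := inter_card hn hz hij hjn hnd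
  have c2 := inter_card hn htz hij hjn hnd
  have r := R_card (i := i) (j := j) hn hij hjn hnd
  have crux := crux1 hn hz hinv hij hjn hnd hend
  rw [affLen_eq n (tPerm n i j * z * tPerm n i j), affLen_eq n z,
    affLen_eq n (z * tPerm n i j)]
  by_cases hzz : z j < z i
  · rw [if_pos hzz] at c1 crux
    by_cases hzz2 : (tPerm n i j * z) j < (tPerm n i j * z) i
    · rw [if_pos hzz2] at c2 crux
      rcases crux with ⟨cr1, cr2⟩
      constructor
      · intro h
        have h6 := cr1 (by omega)
        omega
      · intro h
        have h6 := cr2 (by omega)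
        omega
    · rw [if_neg hzz2] at c2 crux
      rcases crux with ⟨cr1, cr2⟩
      constructor
      · intro h
        have h6 := cr1 (by omega)
        omega
      · intro h
        have h6 := cr2 (by omega)
        omega
  · rw [if_neg hzz] at c1 crux
    by_cases hzz2 : (tPerm n i j * z) j < (tPerm n i j * z) i
    · rw [if_pos hzz2] at c2 crux
      rcases crux with ⟨cr1, cr2⟩
      constructor
      · intro h
        have h6 := cr1 (by omega)
        omega
      · intro h
        have h6 := cr2 (by omega)
        omega
    · rw [if_neg hzz2] at c2 crux
      rcases crux with ⟨cr1, cr2⟩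
      constructor
      · intro h
        have h6 := cr1 (by omega)
        omega
      · intro h
        have h6 := cr2 (by omega)
        omega

end AffProof

open AffProof

/-- Let `z ∈ Ĩ_n` and `i < j` with `j ≢ i (mod n)`. Suppose either all of
`i, i+1, …, j-1` are right endpoints of `z`, or all of `i+1, …, j-1, j` are left endpoints
of `z`. Then `ℓ(t_{ij} z t_{ij}) = ℓ(z) + 2` if and only if `ℓ(z t_{ij}) = ℓ(z) + 1`. -/
theorem conj_cover (n : ℕ) (hn : 2 ≤ n) (z : Equiv.Perm ℤ)
    (hz : IsAffine n z) (hinv : ∀ x : ℤ, z (z x) = x) (i j : ℤ)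
    (hij : i < j) (hmod : ¬ i ≡ j [ZMOD (n : ℤ)])
    (hend : (∀ e : ℤ, i ≤ e → e < j → z e < e) ∨ (∀ e : ℤ, i < e → e ≤ j → e < z e)) :
    affLen n (tPerm n i j * z * tPerm n i j) = affLen n z + 2 ↔
      affLen n (z * tPerm n i j) = affLen n z + 1 := by
  have hn0 : 0 < n := by omega
  have hper : Per n z := hz.1
  have hnd : ¬ (n:ℤ) ∣ j - i := fun h => hmod (Int.modEq_iff_dvd.2 h)
  rcases hend with h1 | h2
  · exact main1 hn0 hper hinv hij hnd h1
  · set ν : Equiv.Perm ℤ := Equiv.neg ℤ with hνs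
    have hν : ∀ x : ℤ, ν x = -x := fun x => rfl
    have hconj_app : ∀ (u : Equiv.Perm ℤ) (x : ℤ), (ν * u * ν) x = - u (-x) := by
      intro u x
      simp only [Equiv.Perm.mul_apply, hν]
    have hconj_per : ∀ (u : Equiv.Perm ℤ), Per n u → Per n (ν * u * ν) := by
      intro u hu x
      rw [hconj_app, hconj_app]
      have h5 := hu (-x - n)
      have e : -x - (n:ℤ) + n = -x := by ring
      rw [e] at h5
      have e2 : -(x + (n:ℤ)) = -x - n := by ring
      rw [e2, h5]
      ring
    have haffneg : ∀ (u : Equiv.Perm ℤ), Per n u → affLen n (ν * u * ν) = affLen n u := by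
      intro u hu
      rw [affLen_eq, affLen_eq]
      exact ncard_neg hn0 hu (hconj_per u hu) (hconj_app u)
    set z' := ν * z * ν with hz's
    have hz' : Per n z' := hconj_per z hper
    have hinv' : ∀ x : ℤ, z' (z' x) = x := by
      intro x
      rw [hz's, hconj_app, hconj_app]
      simp only [neg_neg, hinv]
    have hij' : -j < -i := by omega
    have hnd' : ¬ (n:ℤ) ∣ (-i) - (-j) := by
      intro hc
      apply hnd
      have e : (-i) - (-j) = j - i := by ring
      rwa [e] at hc
    have hend' : ∀ e : ℤ, -j ≤ e → e < -i → z' e < e := by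
      intro e he1 he2
      have h5 := h2 (-e) (by omega) (by omega)
      rw [hz's, hconj_app]
      omega
    have hmain := main1 hn0 hz' hinv' hij' hnd' hend'
    have ht' : tPerm n (-j) (-i) = ν * tPerm n i j * ν := by
      apply Equiv.ext
      intro x
      rw [hconj_app]
      have hdi : ((n:ℤ) ∣ -x - i) ↔ ((n:ℤ) ∣ x + i) := by
        constructor
        · intro hc; have h5 := dvd_neg.2 hc; rwa [show -(-x - i) = x + i by ring] at h5
        · intro hc; have h5 := dvd_neg.2 hc; rwa [show -(x + i) = -x - i by ring] at h5
      have hdj : ((n:ℤ) ∣ -x - j) ↔ ((n:ℤ) ∣ x + j) := by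
        constructor
        · intro hc; have h5 := dvd_neg.2 hc; rwa [show -(-x - j) = x + j by ring] at h5
        · intro hc; have h5 := dvd_neg.2 hc; rwa [show -(x + j) = -x - j by ring] at h5
      by_cases hxi : (n:ℤ) ∣ x + i
      · have hxj : ¬ (n:ℤ) ∣ x + j := by
          intro hc
          apply hnd
          have h5 := dvd_sub hc hxi
          rwa [show x + j - (x + i) = j - i by ring] at h5
        have hL : tPerm n (-j) (-i) x = x - (j - i) := by
          have := tP_j (i := -j) (j := -i) (n := n) (x := x)
            (fun hc => hxj (by rwa [show x - -j = x + j by ring] at hc))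
            (by rwa [show x - -i = x + i by ring])
          rw [this]; ring
        have hR : tPerm n i j (-x) = -x + (j - i) :=
          tP_i (by rwa [show -x - i = -(x + i) by ring, dvd_neg])
        rw [hL, hR]; ring
      · by_cases hxj : (n:ℤ) ∣ x + j
        · have hL : tPerm n (-j) (-i) x = x + (j - i) := by
            have := tP_i (i := -j) (j := -i) (n := n) (x := x)
              (by rwa [show x - -j = x + j by ring])
            rw [this]; ring
          have hR : tPerm n i j (-x) = -x - (j - i) :=
            tP_j (by rwa [show -x - i = -(x + i) by ring, dvd_neg])
              (by rwa [show -x - j = -(x + j) by ring, dvd_neg])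
          rw [hL, hR]; ring
        · have hL : tPerm n (-j) (-i) x = x :=
            tP_o (fun hc => hxj (by rwa [show x - -j = x + j by ring] at hc))
              (fun hc => hxi (by rwa [show x - -i = x + i by ring] at hc))
          have hR : tPerm n i j (-x) = -x :=
            tP_o (by rwa [show -x - i = -(x + i) by ring, dvd_neg])
              (by rwa [show -x - j = -(x + j) by ring, dvd_neg])
          rw [hL, hR]; ring
    have hνν : ν * ν = 1 := by
      apply Equiv.ext
      intro x
      simp only [Equiv.Perm.mul_apply, hν, neg_neg]
      rfl
    have e1 : tPerm n (-j) (-i) * z' * tPerm n (-j) (-i)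
        = ν * (tPerm n i j * z * tPerm n i j) * ν := by
      rw [ht', hz's]
      calc (ν * tPerm n i j * ν) * (ν * z * ν) * (ν * tPerm n i j * ν)
          = ν * tPerm n i j * (ν * ν) * z * (ν * ν) * tPerm n i j * ν := by
            simp only [mul_assoc]
        _ = ν * (tPerm n i j * z * tPerm n i j) * ν := by
            rw [hνν]
            simp only [mul_one, one_mul, mul_assoc]
    have e2 : z' * tPerm n (-j) (-i) = ν * (z * tPerm n i j) * ν := by
      rw [ht', hz's]
      calc (ν * z * ν) * (ν * tPerm n i j * ν)
          = ν * z * (ν * ν) * tPerm n i j * ν := by simp only [mul_assoc]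
        _ = ν * (z * tPerm n i j) * ν := by
            rw [hνν]
            simp only [mul_one, one_mul, mul_assoc]
    rw [e1, e2, hz's] at hmain
    rw [haffneg _ (per_mul (per_mul (per_t n i j) hper) (per_t n i j)),
      haffneg _ hper, haffneg _ (per_mul hper (per_t n i j))] at hmain
    exact hmain
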